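/- Functoriality of ℓ^(p) under units congruent to 1 mod t^p: Let k be a field of characteristic p ≥ 5 and u, v, u', v' ∈ k[[t]]^× with u ≡ u' and v ≡ v' modulo (t^p). Then ℓ^(p)(ū ∧ v̄) = ℓ^(p)(ū' ∧ v̄') where bars denote images in (k[t]/(t^p))^×. Moreover ℓ^(p) is bimultiplicative and antisymmetric: ℓ^(p)(u₁u₂ ∧ v) = ℓ^(p)(u₁∧v) + ℓ^(p)(u₂∧v) and ℓ^(p)(u∧v) = −ℓ^(p)(v∧u), and ℓ^(p)(c ∧ v) = 0 for constants c ∈ k^×. -/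

import Mathlib

open Finset PowerSeries

variable (p : ℕ) {k : Type*} [Field k]

/-- Truncated logarithm `log(1+z) = ∑_{1 ≤ n < p} (-1)^{n+1} z^n / n`. -/
noncomputable def tlog (z : PowerSeries k) : PowerSeries k :=
  ∑ n ∈ Finset.Ico 1 p, ((-1 : k) ^ (n + 1) * (n : k)⁻¹) • z ^ n

/-- `ℓ_i(u)`: the `t^i`-coefficient of `log(u/u(0))`. -/
noncomputable def ell (i : ℕ) (u : PowerSeries k) : k :=
  PowerSeries.coeff (R := k) i
    (tlog p (PowerSeries.C (R := k) (PowerSeries.constantCoeff (R := k) u)⁻¹ * u - 1))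

/-- `ℓ^(p)(u ∧ v) = (1/2)∑_{1≤i<p} i·(ℓ_{p-i}(u)ℓ_i(v) − ℓ_{p-i}(v)ℓ_i(u))`. -/
noncomputable def ellp (u v : PowerSeries k) : k :=
  (2 : k)⁻¹ * ∑ i ∈ Finset.Ico 1 p,
    (i : k) * (ell p (p - i) u * ell p i v - ell p (p - i) v * ell p i u)

/-- Truncated exponential `ē^z = ∑_{0 ≤ n < p} z^n / n!`. -/
noncomputable def ee (z : PowerSeries k) : PowerSeries k :=
  ∑ n ∈ Finset.range p, ((n.factorial : k)⁻¹) • z ^ n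

-- ### auxiliary lemmas

lemma aux_tlog_dvd {z z' : PowerSeries k} (h : (X : PowerSeries k) ^ p ∣ z - z') :
    (X : PowerSeries k) ^ p ∣ tlog p z - tlog p z' := by
  unfold tlog
  rw [← Finset.sum_sub_distrib]
  refine Finset.dvd_sum fun n _ => ?_
  rw [← smul_sub, PowerSeries.smul_eq_C_mul]
  exact Dvd.dvd.mul_left (h.trans (sub_dvd_pow_sub_pow z z' n)) _

lemma aux_constCoeff_eq {u u' : PowerSeries k} (hp : 0 < p)
    (h : (X : PowerSeries k) ^ p ∣ u - u') :
    constantCoeff u = constantCoeff u' := by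
  have := (PowerSeries.X_pow_dvd_iff.mp h) 0 hp
  rw [map_sub, coeff_zero_eq_constantCoeff, sub_eq_zero] at this
  exact this

lemma aux_ell_congr {u u' : PowerSeries k} (hp : 0 < p)
    (h : (X : PowerSeries k) ^ p ∣ u - u') {i : ℕ} (hi : i < p) :
    ell p i u = ell p i u' := by
  have hc := aux_constCoeff_eq p hp h
  unfold ell
  rw [hc]
  have hz : (X : PowerSeries k) ^ p ∣
      (C (constantCoeff u')⁻¹ * u - 1) - (C (constantCoeff u')⁻¹ * u' - 1) := by
    have : (C (constantCoeff u')⁻¹ * u - 1) - (C (constantCoeff u')⁻¹ * u' - 1)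
        = C (constantCoeff u')⁻¹ * (u - u') := by ring
    rw [this]
    exact h.mul_left _
  have := PowerSeries.X_pow_dvd_iff.mp (aux_tlog_dvd p hz) i hi
  rw [map_sub, sub_eq_zero] at this
  exact this

lemma aux_cast_ne_zero [CharP k p] (hp : p.Prime) {n : ℕ} (h1 : 1 ≤ n) (h2 : n < p) :
    (n : k) ≠ 0 := by
  rw [Ne, CharP.cast_eq_zero_iff k p]
  exact fun hd => absurd (Nat.le_of_dvd (by omega) hd) (by omega)

lemma aux_derivative_tlog [CharP k p] (hp : p.Prime) (z : PowerSeries k) :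
    d⁄dX k (tlog p z) = (∑ m ∈ Finset.range (p - 1), (-z) ^ m) * d⁄dX k z := by
  unfold tlog
  rw [map_sum, Finset.sum_mul]
  rw [Finset.sum_Ico_eq_sum_range]
  refine Finset.sum_congr rfl fun m hm => ?_
  rw [Finset.mem_range] at hm
  rw [Derivation.map_smul, Derivation.leibniz_pow]
  have h1 : (1 + m) - 1 = m := by omega
  have hmk : ((1 + m : ℕ) : k) ≠ 0 := aux_cast_ne_zero p hp (by omega) (by omega)
  rw [h1, nsmul_eq_mul, smul_eq_mul, PowerSeries.smul_eq_C_mul,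
    ← map_natCast (C (R := k)) (1 + m)]
  have key : C ((-1 : k) ^ (1 + m + 1) * ((1 + m : ℕ) : k)⁻¹) * C ((1 + m : ℕ) : k)
      = C ((-1 : k) ^ m) := by
    rw [← map_mul]
    congr 1
    rw [mul_assoc, inv_mul_cancel₀ hmk, mul_one,
      show 1 + m + 1 = m + 2 by omega, pow_add]
    norm_num
  have hC : ((-1 : PowerSeries k)) ^ m = C ((-1 : k) ^ m) := by
    rw [map_pow, map_neg, map_one]
  rw [neg_pow z m, hC]
  linear_combination (z ^ m * d⁄dX k z) * key

lemma aux_geom (hp : p.Prime) (hp5 : 5 ≤ p) (z : PowerSeries k) :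
    (∑ m ∈ Finset.range (p - 1), (-z) ^ m) * (1 + z) = 1 - z ^ (p - 1) := by
  have hodd : Odd p := hp.odd_of_ne_two (by omega)
  have heven : Even (p - 1) := by
    obtain ⟨t, ht⟩ := hodd
    exact ⟨t, by omega⟩
  have h := geom_sum_mul (-z) (p - 1)
  rw [heven.neg_pow] at h
  linear_combination -h

lemma aux_u_mul_deriv_tlog [CharP k p] (hp : p.Prime) (hp5 : 5 ≤ p)
    (u : PowerSeries k) (hu : IsUnit u) :
    u * d⁄dX k (tlog p (C (constantCoeff u)⁻¹ * u - 1))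
      = (1 - (C (constantCoeff u)⁻¹ * u - 1) ^ (p - 1)) * d⁄dX k u := by
  set c := constantCoeff u with hc
  have hc0 : c ≠ 0 := by
    intro h
    rw [PowerSeries.isUnit_iff_constantCoeff, ← hc, h] at hu
    exact hu.ne_zero rfl
  set z : PowerSeries k := C c⁻¹ * u - 1 with hz
  have hdz : d⁄dX k z = C c⁻¹ * d⁄dX k u := by
    rw [hz, Derivation.map_sub, Derivation.map_one_eq_zero, sub_zero,
      Derivation.leibniz, derivative_C, smul_zero, add_zero, smul_eq_mul]
  have hCc : C c * C c⁻¹ = 1 := by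
    rw [← map_mul, mul_inv_cancel₀ hc0, map_one]
  have huz : u = C c * (1 + z) := by
    rw [hz]
    linear_combination (-u) * hCc
  rw [aux_derivative_tlog p hp, hdz]
  calc u * ((∑ m ∈ Finset.range (p - 1), (-z) ^ m) * (C c⁻¹ * d⁄dX k u))
      = (C c * C c⁻¹) * (((∑ m ∈ Finset.range (p - 1), (-z) ^ m) * (1 + z)) * d⁄dX k u) := by
        rw [huz]; ring
    _ = (1 - z ^ (p - 1)) * d⁄dX k u := by
        rw [hCc, aux_geom p hp hp5, one_mul]

lemma aux_ell_eq_logDeriv [CharP k p] (hp : p.Prime) (hp5 : 5 ≤ p)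
    (u : PowerSeries k) (hu : IsUnit u) {i : ℕ} (h1 : 1 ≤ i) (h2 : i < p) :
    ell p i u * (i : k) = coeff (i - 1) (d⁄dX k u * u⁻¹) := by
  set c := constantCoeff u with hc
  have hc0 : c ≠ 0 := by
    intro h
    rw [PowerSeries.isUnit_iff_constantCoeff, ← hc, h] at hu
    exact hu.ne_zero rfl
  set z : PowerSeries k := C c⁻¹ * u - 1 with hz
  have huu : u * u⁻¹ = 1 := PowerSeries.mul_inv_cancel u hc0
  have hD : d⁄dX k (tlog p z) = (1 - z ^ (p - 1)) * (d⁄dX k u * u⁻¹) := by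
    have h3 := aux_u_mul_deriv_tlog p hp hp5 u hu
    rw [← hc, ← hz] at h3
    calc d⁄dX k (tlog p z) = (u * d⁄dX k (tlog p z)) * u⁻¹ := by
          rw [mul_comm u, mul_assoc, huu, mul_one]
      _ = (1 - z ^ (p - 1)) * (d⁄dX k u * u⁻¹) := by rw [h3]; ring
  have hXz : (X : PowerSeries k) ∣ z := by
    rw [PowerSeries.X_dvd_iff, hz, map_sub, map_mul, constantCoeff_C, ← hc,
      inv_mul_cancel₀ hc0, map_one, sub_self]
  have hzero : coeff (i - 1) (z ^ (p - 1) * (d⁄dX k u * u⁻¹)) = 0 := by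
    have hdvd : (X : PowerSeries k) ^ (p - 1) ∣ z ^ (p - 1) * (d⁄dX k u * u⁻¹) :=
      Dvd.dvd.mul_right (pow_dvd_pow_of_dvd hXz _) _
    exact PowerSeries.X_pow_dvd_iff.mp hdvd (i - 1) (by omega)
  have hi1 : i - 1 + 1 = i := by omega
  have hcd : coeff (i - 1) (d⁄dX k (tlog p z)) = coeff i (tlog p z) * (i : k) := by
    rw [PowerSeries.coeff_derivative, hi1]
    congr 1
    rw [Nat.cast_sub h1]
    ring
  have : ell p i u = coeff i (tlog p z) := by rw [ell, ← hc, ← hz]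
  rw [this, ← hcd, hD, sub_mul, one_mul, map_sub, hzero, sub_zero]

lemma aux_ell_mul [CharP k p] (hp : p.Prime) (hp5 : 5 ≤ p)
    (u v : PowerSeries k) (hu : IsUnit u) (hv : IsUnit v)
    {i : ℕ} (h1 : 1 ≤ i) (h2 : i < p) :
    ell p i (u * v) = ell p i u + ell p i v := by
  have hcu : constantCoeff u ≠ 0 := by
    intro h; rw [PowerSeries.isUnit_iff_constantCoeff, h] at hu; exact hu.ne_zero rfl
  have hcv : constantCoeff v ≠ 0 := by
    intro h; rw [PowerSeries.isUnit_iff_constantCoeff, h] at hv; exact hv.ne_zero rfl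
  have huu : u * u⁻¹ = 1 := PowerSeries.mul_inv_cancel u hcu
  have hvv : v * v⁻¹ = 1 := PowerSeries.mul_inv_cancel v hcv
  have hLD : d⁄dX k (u * v) * (u * v)⁻¹ = d⁄dX k u * u⁻¹ + d⁄dX k v * v⁻¹ := by
    rw [Derivation.leibniz, PowerSeries.mul_inv_rev, smul_eq_mul, smul_eq_mul]
    calc (u * d⁄dX k v + v * d⁄dX k u) * (v⁻¹ * u⁻¹)
        = (u * u⁻¹) * (d⁄dX k v * v⁻¹) + (v * v⁻¹) * (d⁄dX k u * u⁻¹) := by ring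
      _ = d⁄dX k u * u⁻¹ + d⁄dX k v * v⁻¹ := by rw [huu, hvv]; ring
  have hik : (i : k) ≠ 0 := aux_cast_ne_zero p hp h1 h2
  have h := aux_ell_eq_logDeriv p hp hp5 (u * v) (hu.mul hv) h1 h2
  rw [hLD, map_add, ← aux_ell_eq_logDeriv p hp hp5 u hu h1 h2,
    ← aux_ell_eq_logDeriv p hp hp5 v hv h1 h2] at h
  exact mul_right_cancel₀ hik (by linear_combination h)

lemma aux_ell_C {c : k} (hc : c ≠ 0) (i : ℕ) : ell p i (C c) = 0 := by
  unfold ell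
  have hz : C (constantCoeff (C c))⁻¹ * C c - 1 = 0 := by
    rw [constantCoeff_C, ← map_mul, inv_mul_cancel₀ hc, map_one, sub_self]
  rw [hz]
  have : tlog p (0 : PowerSeries k) = 0 := by
    unfold tlog
    refine Finset.sum_eq_zero fun n hn => ?_
    rw [Finset.mem_Ico] at hn
    rw [zero_pow (by omega), smul_zero]
  rw [this, map_zero]

/-- Functoriality and linearity properties of `ℓ^(p)`:
it only depends on the arguments modulo `(t^p)`, is bimultiplicative,
antisymmetric, and vanishes on constants. -/
theorem ellp_properties (hp : p.Prime) (hp5 : 5 ≤ p) [CharP k p]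
    (u v u' v' : PowerSeries k)
    (hu : IsUnit u) (hv : IsUnit v) (hu' : IsUnit u') (hv' : IsUnit v')
    (huu' : u - u' ∈ Ideal.span {(X : PowerSeries k) ^ p})
    (hvv' : v - v' ∈ Ideal.span {(X : PowerSeries k) ^ p}) :
    ellp p u v = ellp p u' v' ∧
    (∀ u₁ u₂ w : PowerSeries k, IsUnit u₁ → IsUnit u₂ → IsUnit w →
      ellp p (u₁ * u₂) w = ellp p u₁ w + ellp p u₂ w) ∧
    (∀ a b : PowerSeries k, ellp p a b = -ellp p b a) ∧
    (∀ c : k, c ≠ 0 → ∀ w : PowerSeries k, IsUnit w →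
      ellp p (PowerSeries.C (R := k) c) w = 0) := by
  have hp0 : 0 < p := by omega
  have hdu : (X : PowerSeries k) ^ p ∣ u - u' := Ideal.mem_span_singleton.mp huu'
  have hdv : (X : PowerSeries k) ^ p ∣ v - v' := Ideal.mem_span_singleton.mp hvv'
  refine ⟨?_, ?_, ?_, ?_⟩
  · unfold ellp
    congr 1
    refine Finset.sum_congr rfl fun i hi => ?_
    rw [Finset.mem_Ico] at hi
    rw [aux_ell_congr p hp0 hdu hi.2, aux_ell_congr p hp0 hdv hi.2,
      aux_ell_congr p hp0 hdu (show p - i < p by omega),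
      aux_ell_congr p hp0 hdv (show p - i < p by omega)]
  · intro u₁ u₂ w h1 h2 hw
    unfold ellp
    rw [← mul_add, ← Finset.sum_add_distrib]
    congr 1
    refine Finset.sum_congr rfl fun i hi => ?_
    rw [Finset.mem_Ico] at hi
    rw [aux_ell_mul p hp hp5 u₁ u₂ h1 h2 hi.1 hi.2,
      aux_ell_mul p hp hp5 u₁ u₂ h1 h2 (show 1 ≤ p - i by omega) (show p - i < p by omega)]
    ring
  · intro a b
    unfold ellp
    rw [← mul_neg, ← Finset.sum_neg_distrib]
    congr 1
    refine Finset.sum_congr rfl fun i _ => ?_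
    ring
  · intro c hc w hw
    unfold ellp
    rw [Finset.sum_eq_zero, mul_zero]
    intro i _
    rw [aux_ell_C p hc, aux_ell_C p hc]
    ring
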